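/- For λ > 0, α > 0 and b ∈ ℝ, define g_{λ,α,b}(t) = γ_{λ,α}(t) · (1 + (t − α) b²) for t > 0, where γ_{λ,α}(t) = λ^α t^{α−1} e^{−λt} / Γ(α) is the Gamma density with rate λ and shape α. Then for all λ > 0, α₁, α₂ > 0, b₁, b₂ ∈ ℝ and y > 0: ∫₀^y g_{λ,α₁,b₁}(t) · g_{λ,α₂,b₂}(y − t) dt = γ_{λ,α₁+α₂}(y) · [ 1 + (y − α₁ − α₂) · (α₁ b₁² + α₂ b₂²)/(α₁ + α₂) + α₁ α₂ b₁² b₂² · ( y²/((α₁+α₂)(α₁+α₂+1)) − 2y/(α₁+α₂) + 1 ) ]. -/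

import Mathlib

open MeasureTheory

/-- The Gamma density with rate `lam` and shape `α`, extended by `0` to
nonpositive arguments: `γ_{λ,α}(t) = λ^α t^{α−1} e^{−λt} / Γ(α)` for
`t > 0`. -/
noncomputable def gammaDensity (lam α t : ℝ) : ℝ :=
  if 0 < t then lam ^ α * t ^ (α - 1) * Real.exp (-lam * t) / Real.Gamma α else 0

/-- The "biased Gamma" density `g_{λ,α,b}(t) = γ_{λ,α}(t)·(1 + (t − α) b²)`. -/
noncomputable def biasedGamma (lam α b t : ℝ) : ℝ :=
  gammaDensity lam α t * (1 + (t - α) * b ^ 2)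


lemma ae_ne_pt (y : ℝ) : ∀ᵐ t : ℝ, t ≠ y := by
  refine MeasureTheory.ae_iff.mpr ?_
  simpa using (by simp : (volume : Measure ℝ) {y} = 0)

lemma betaReal_integrable {a b : ℝ} (ha : 0 < a) (hb : 0 < b) {y : ℝ} (hy : 0 < y) :
    IntervalIntegrable (fun t : ℝ => t ^ (a - 1) * (y - t) ^ (b - 1)) volume 0 y := by
  have hc1 : IntervalIntegrable
      (fun x : ℝ => (x : ℂ) ^ ((a : ℂ) - 1) * ((1 : ℂ) - (x : ℂ)) ^ ((b : ℂ) - 1)) volume 0 1 :=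
    Complex.betaIntegral_convergent (by simpa using ha) (by simpa using hb)
  have hc2 := hc1.comp_mul_left (c := y⁻¹)
  rw [zero_div, one_div, inv_inv] at hc2
  have hc3 := hc2.mul_const ((y : ℂ) ^ ((a : ℂ) - 1) * (y : ℂ) ^ ((b : ℂ) - 1))
  refine hc3.mono_fun ?_ ?_
  · exact Measurable.aestronglyMeasurable (by fun_prop)
  · have hyne : ∀ᵐ t ∂(volume.restrict (Set.uIoc (0:ℝ) y)), t ≠ y :=
      ae_restrict_of_ae (ae_ne_pt y)
    filter_upwards [ae_restrict_mem measurableSet_uIoc, hyne] with t htmem hty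
    rw [Set.uIoc_of_le hy.le] at htmem
    have ht0 : 0 < t := htmem.1
    have htly : t < y := lt_of_le_of_ne htmem.2 hty
    have h1t : 0 ≤ 1 - y⁻¹ * t := by
      have := (div_lt_one hy).mpr htly
      rw [div_eq_inv_mul] at this
      linarith
    have ea : ((a : ℂ) - 1) = ((a - 1 : ℝ) : ℂ) := by push_cast; ring
    have eb : ((b : ℂ) - 1) = ((b - 1 : ℝ) : ℂ) := by push_cast; ring
    have e2 : (1 : ℂ) - ((y⁻¹ * t : ℝ) : ℂ) = ((1 - y⁻¹ * t : ℝ) : ℂ) := by push_cast; ring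
    have m1 : (y⁻¹ * t) ^ (a - 1) * y ^ (a - 1) = t ^ (a - 1) := by
      rw [← Real.mul_rpow (by positivity) hy.le, show y⁻¹ * t * y = t by field_simp]
    have m2 : (1 - y⁻¹ * t) ^ (b - 1) * y ^ (b - 1) = (y - t) ^ (b - 1) := by
      rw [← Real.mul_rpow h1t hy.le, show (1 - y⁻¹ * t) * y = y - t by field_simp]
    have key : ((y⁻¹ * t : ℝ) : ℂ) ^ ((a : ℂ) - 1) * ((1 : ℂ) - ((y⁻¹ * t : ℝ) : ℂ)) ^ ((b : ℂ) - 1)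
        * ((y : ℂ) ^ ((a : ℂ) - 1) * (y : ℂ) ^ ((b : ℂ) - 1))
        = ((t ^ (a - 1) * (y - t) ^ (b - 1) : ℝ) : ℂ) := by
      rw [e2, ea, eb, ← Complex.ofReal_cpow (by positivity), ← Complex.ofReal_cpow h1t,
        ← Complex.ofReal_cpow hy.le, ← Complex.ofReal_cpow hy.le]
      norm_cast
      linear_combination ((1 - y⁻¹ * t) ^ (b - 1) * y ^ (b - 1)) * m1 + (t ^ (a - 1)) * m2
    simp only [key, Complex.norm_real, Real.norm_eq_abs, le_refl]

lemma betaReal_eq {a b : ℝ} (ha : 0 < a) (hb : 0 < b) {y : ℝ} (hy : 0 < y) :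
    ∫ t in (0:ℝ)..y, t ^ (a - 1) * (y - t) ^ (b - 1)
      = y ^ (a + b - 1) * (Real.Gamma a * Real.Gamma b / Real.Gamma (a + b)) := by
  have hsc := Complex.betaIntegral_scaled (a : ℂ) (b : ℂ) hy
  have hGab : (0 : ℝ) < Real.Gamma (a + b) := Real.Gamma_pos_of_pos (by linarith)
  have hB : Complex.betaIntegral (a : ℂ) (b : ℂ)
      = ((Real.Gamma a * Real.Gamma b / Real.Gamma (a + b) : ℝ) : ℂ) := by
    have h := Complex.Gamma_mul_Gamma_eq_betaIntegral (s := (a : ℂ)) (t := (b : ℂ))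
      (by simpa using ha) (by simpa using hb)
    have hGs : Complex.Gamma ((a : ℂ) + (b : ℂ)) = ((Real.Gamma (a + b) : ℝ) : ℂ) := by
      rw [← Complex.ofReal_add, Complex.Gamma_ofReal]
    have hne : ((Real.Gamma (a + b) : ℝ) : ℂ) ≠ 0 := by exact_mod_cast hGab.ne'
    rw [hGs, Complex.Gamma_ofReal, Complex.Gamma_ofReal] at h
    push_cast
    field_simp
    linear_combination -h
  have hL : (∫ x in (0:ℝ)..y, (x : ℂ) ^ ((a : ℂ) - 1) * ((y : ℂ) - x) ^ ((b : ℂ) - 1))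
      = ((∫ t in (0:ℝ)..y, t ^ (a - 1) * (y - t) ^ (b - 1) : ℝ) : ℂ) := by
    rw [← intervalIntegral.integral_ofReal]
    refine intervalIntegral.integral_congr_ae ?_
    filter_upwards [ae_ne_pt y] with t hty htmem
    rw [Set.uIoc_of_le hy.le] at htmem
    have ht0 : 0 < t := htmem.1
    have hty' : 0 ≤ y - t := by
      have := lt_of_le_of_ne htmem.2 hty
      linarith
    have ea : ((a : ℂ) - 1) = ((a - 1 : ℝ) : ℂ) := by push_cast; ring
    have eb : ((b : ℂ) - 1) = ((b - 1 : ℝ) : ℂ) := by push_cast; ring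
    have e2 : (y : ℂ) - (t : ℂ) = ((y - t : ℝ) : ℂ) := by push_cast; ring
    rw [ea, eb, e2, ← Complex.ofReal_cpow ht0.le, ← Complex.ofReal_cpow hty']
    norm_cast
  have hy' : (y : ℂ) ^ ((a : ℂ) + (b : ℂ) - 1) = ((y ^ (a + b - 1) : ℝ) : ℂ) := by
    rw [show ((a : ℂ) + (b : ℂ) - 1) = ((a + b - 1 : ℝ) : ℂ) by push_cast; ring,
      ← Complex.ofReal_cpow hy.le]
  rw [hL, hB, hy', ← Complex.ofReal_mul] at hsc
  exact_mod_cast hsc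

/-- Exact convolution identity for biased Gamma densities:
`∫₀^y g_{λ,α₁,b₁}(t) g_{λ,α₂,b₂}(y−t) dt
  = γ_{λ,α₁+α₂}(y) [ 1 + (y − α₁ − α₂)(α₁b₁² + α₂b₂²)/(α₁+α₂)
      + α₁α₂b₁²b₂² ( y²/((α₁+α₂)(α₁+α₂+1)) − 2y/(α₁+α₂) + 1 ) ]`. -/
theorem stmt17 (lam α₁ α₂ b₁ b₂ y : ℝ)
    (hlam : 0 < lam) (h1 : 0 < α₁) (h2 : 0 < α₂) (hy : 0 < y) :
    (∫ t in (0 : ℝ)..y, biasedGamma lam α₁ b₁ t * biasedGamma lam α₂ b₂ (y - t))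
      = gammaDensity lam (α₁ + α₂) y *
          (1 + (y - α₁ - α₂) * (α₁ * b₁ ^ 2 + α₂ * b₂ ^ 2) / (α₁ + α₂) +
            α₁ * α₂ * b₁ ^ 2 * b₂ ^ 2 *
              (y ^ 2 / ((α₁ + α₂) * (α₁ + α₂ + 1)) - 2 * y / (α₁ + α₂) + 1)) := by
  have hG1 : (0:ℝ) < Real.Gamma α₁ := Real.Gamma_pos_of_pos h1
  have hG2 : (0:ℝ) < Real.Gamma α₂ := Real.Gamma_pos_of_pos h2
  have hGs : (0:ℝ) < Real.Gamma (α₁ + α₂) := Real.Gamma_pos_of_pos (by linarith)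
  set C : ℝ := lam ^ (α₁ + α₂) * Real.exp (-lam * y) / (Real.Gamma α₁ * Real.Gamma α₂) with hC
  set c₀ : ℝ := (1 - α₁ * b₁ ^ 2) * (1 + (y - α₂) * b₂ ^ 2) with hc0
  set c₁ : ℝ := b₁ ^ 2 * (1 + (y - α₂) * b₂ ^ 2) - b₂ ^ 2 * (1 - α₁ * b₁ ^ 2) with hc1
  set c₂ : ℝ := -(b₁ ^ 2 * b₂ ^ 2) with hc2
  have hstep : (∫ t in (0 : ℝ)..y, biasedGamma lam α₁ b₁ t * biasedGamma lam α₂ b₂ (y - t))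
      = ∫ t in (0:ℝ)..y,
          C * (c₀ * (t ^ (α₁ - 1) * (y - t) ^ (α₂ - 1))
             + c₁ * (t ^ (α₁ + 1 - 1) * (y - t) ^ (α₂ - 1))
             + c₂ * (t ^ (α₁ + 2 - 1) * (y - t) ^ (α₂ - 1))) := by
    refine intervalIntegral.integral_congr_ae ?_
    filter_upwards [ae_ne_pt y] with t hty htmem
    rw [Set.uIoc_of_le hy.le] at htmem
    have ht0 : 0 < t := htmem.1
    have hty' : 0 < y - t := sub_pos.mpr (lt_of_le_of_ne htmem.2 hty)
    have e1 : t ^ (α₁ + 1 - 1) = t ^ (α₁ - 1) * t := by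
      rw [show α₁ + 1 - 1 = (α₁ - 1) + 1 by ring, Real.rpow_add_one ht0.ne']
    have e2 : t ^ (α₁ + 2 - 1) = t ^ (α₁ - 1) * t * t := by
      rw [show α₁ + 2 - 1 = ((α₁ - 1) + 1) + 1 by ring, Real.rpow_add_one ht0.ne',
        Real.rpow_add_one ht0.ne']
    have e3 : lam ^ (α₁ + α₂) = lam ^ α₁ * lam ^ α₂ := Real.rpow_add hlam _ _
    have e4 : Real.exp (-lam * y) = Real.exp (-lam * t) * Real.exp (-lam * (y - t)) := by
      rw [← Real.exp_add]; ring_nf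
    simp only [biasedGamma, gammaDensity, ht0, hty', if_true]
    rw [hC, hc0, hc1, hc2, e1, e2, e3, e4]
    field_simp
    ring
  have I0 := betaReal_integrable h1 h2 hy
  have I1 := betaReal_integrable (show (0:ℝ) < α₁ + 1 by linarith) h2 hy
  have I2 := betaReal_integrable (show (0:ℝ) < α₁ + 2 by linarith) h2 hy
  rw [hstep, intervalIntegral.integral_const_mul,
    intervalIntegral.integral_add ((I0.const_mul c₀).add (I1.const_mul c₁)) (I2.const_mul c₂),
    intervalIntegral.integral_add (I0.const_mul c₀) (I1.const_mul c₁),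
    intervalIntegral.integral_const_mul, intervalIntegral.integral_const_mul,
    intervalIntegral.integral_const_mul,
    betaReal_eq h1 h2 hy,
    betaReal_eq (show (0:ℝ) < α₁ + 1 by linarith) h2 hy,
    betaReal_eq (show (0:ℝ) < α₁ + 2 by linarith) h2 hy]
  have g1 : Real.Gamma (α₁ + 1) = α₁ * Real.Gamma α₁ := Real.Gamma_add_one h1.ne'
  have g2 : Real.Gamma (α₁ + 2) = (α₁ + 1) * (α₁ * Real.Gamma α₁) := by
    rw [show α₁ + 2 = (α₁ + 1) + 1 by ring, Real.Gamma_add_one (by linarith), g1]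
  have g3 : Real.Gamma (α₁ + 1 + α₂) = (α₁ + α₂) * Real.Gamma (α₁ + α₂) := by
    rw [show α₁ + 1 + α₂ = (α₁ + α₂) + 1 by ring, Real.Gamma_add_one (by linarith)]
  have g4 : Real.Gamma (α₁ + 2 + α₂) = (α₁ + α₂ + 1) * ((α₁ + α₂) * Real.Gamma (α₁ + α₂)) := by
    rw [show α₁ + 2 + α₂ = ((α₁ + α₂) + 1) + 1 by ring, Real.Gamma_add_one (by linarith),
      Real.Gamma_add_one (by linarith)]
  have y1 : y ^ (α₁ + 1 + α₂ - 1) = y ^ (α₁ + α₂ - 1) * y := by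
    rw [show α₁ + 1 + α₂ - 1 = (α₁ + α₂ - 1) + 1 by ring, Real.rpow_add_one hy.ne']
  have y2 : y ^ (α₁ + 2 + α₂ - 1) = y ^ (α₁ + α₂ - 1) * y * y := by
    rw [show α₁ + 2 + α₂ - 1 = ((α₁ + α₂ - 1) + 1) + 1 by ring, Real.rpow_add_one hy.ne',
      Real.rpow_add_one hy.ne']
  rw [g1, g2, g3, g4, y1, y2, hC, hc0, hc1, hc2]
  simp only [gammaDensity, hy, if_true]
  field_simp
  ring
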